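/- Let T be a bounded operator on a Hilbert space H with bounded inverse, preserving dom(1+D²)^{1/2} for a self-adjoint D, and suppose δⁿ(T) := [(1+D²)^{1/2}, ·] applied n times to T is bounded for all n ≥ 0. Then δⁿ(T⁻¹) is bounded for all n ≥ 0; explicitly, δ(T⁻¹) = -T⁻¹ δ(T) T⁻¹. -/

import Mathlib

open scoped InnerProductSpace
open LinearPMap

/-- A bounded operator `T` lies in `OP⁰` for the positive self-adjoint operator
`Λ = (1+D²)^{1/2}`: all iterated commutators `δⁿ(T) = [Λ, ·]ⁿ(T)` are (extend to) bounded
operators.  This is encoded by a sequence `f` of bounded operators with `f 0 = T`, each `f n`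
preserving `dom Λ`, and `f (n+1)` extending the commutator `Λ (f n) - (f n) Λ` on `dom Λ`. -/
def InOPZero {H : Type*} [NormedAddCommGroup H] [InnerProductSpace ℂ H]
    (Λ : H →ₗ.[ℂ] H) (T : H →L[ℂ] H) : Prop :=
  ∃ (f : ℕ → (H →L[ℂ] H)) (hmem : ∀ (n : ℕ) (x : H), x ∈ Λ.domain → f n x ∈ Λ.domain),
    f 0 = T ∧
      ∀ (n : ℕ) (x : H) (hx : x ∈ Λ.domain),
        f (n + 1) x = Λ ⟨f n x, hmem n x hx⟩ - f n (Λ ⟨x, hx⟩)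

section Aux
variable {H : Type*} [NormedAddCommGroup H] [InnerProductSpace ℂ H] [CompleteSpace H]
variable {Λ : H →ₗ.[ℂ] H}

lemma lam_symm (hsa : Λ† = Λ) (u v : Λ.domain) :
    ⟪Λ u, (v : H)⟫_ℂ = ⟪(u : H), Λ v⟫_ℂ := by
  have hd : Dense (Λ.domain : Set H) := by
    have : IsSelfAdjoint Λ := hsa
    exact this.dense_domain
  have h := LinearPMap.adjoint_isFormalAdjoint (T := Λ) hd
  rw [hsa] at h
  exact h u v

lemma lam_key (hsa : Λ† = Λ) {y w : H}
    (hw : ∀ u : Λ.domain, ⟪w, (u : H)⟫_ℂ = ⟪y, Λ u⟫_ℂ) :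
    ∃ hy : y ∈ Λ.domain, Λ ⟨y, hy⟩ = w := by
  have hd : Dense (Λ.domain : Set H) := by
    have : IsSelfAdjoint Λ := hsa
    exact this.dense_domain
  have hy' : y ∈ (Λ†).domain := LinearPMap.mem_adjoint_domain_of_exists y ⟨w, fun u => hw u⟩
  have hval : Λ† ⟨y, hy'⟩ = w := LinearPMap.adjoint_apply_eq hd ⟨y, hy'⟩ (fun u => hw u)
  rw [← hsa]
  exact ⟨hy', hval⟩

open Filter Topology in
lemma lam_closed (hsa : Λ† = Λ) {u : ℕ → Λ.domain} {y z : H}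
    (h1 : Filter.Tendsto (fun n => (u n : H)) Filter.atTop (nhds y))
    (h2 : Filter.Tendsto (fun n => Λ (u n)) Filter.atTop (nhds z)) :
    ∃ hy : y ∈ Λ.domain, Λ ⟨y, hy⟩ = z := by
  apply lam_key hsa
  intro v
  have c1 : Filter.Tendsto (fun n => ⟪Λ (u n), (v : H)⟫_ℂ) Filter.atTop (nhds ⟪z, (v : H)⟫_ℂ) :=
    (Continuous.inner continuous_id continuous_const).continuousAt.tendsto.comp h2 |>.congr (fun n => rfl)
  have c2 : Filter.Tendsto (fun n => ⟪(u n : H), Λ v⟫_ℂ) Filter.atTop (nhds ⟪y, Λ v⟫_ℂ) :=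
    (Continuous.inner continuous_id continuous_const).continuousAt.tendsto.comp h1 |>.congr (fun n => rfl)
  have heq : (fun n => ⟪Λ (u n), (v : H)⟫_ℂ) = fun n => ⟪(u n : H), Λ v⟫_ℂ :=
    funext fun n => lam_symm hsa (u n) v
  rw [heq] at c1
  exact tendsto_nhds_unique c1 c2


/-- The operator `1 + εΛ` on the domain of `Λ`, as a linear map. -/
noncomputable def resOp (Λ : H →ₗ.[ℂ] H) (ε : ℝ) : Λ.domain →ₗ[ℂ] H :=
  Λ.domain.subtype + (ε : ℂ) • Λ.toFun

lemma resOp_apply (ε : ℝ) (u : Λ.domain) : resOp Λ ε u = (u : H) + (ε : ℂ) • Λ u := rfl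

lemma resOp_lower (hpos : ∀ u : Λ.domain, 0 ≤ (⟪Λ u, (u : H)⟫_ℂ).re) {ε : ℝ} (hε : 0 < ε)
    (u : Λ.domain) : ‖(u : H)‖ ≤ ‖resOp Λ ε u‖ := by
  rcases eq_or_ne ‖(u : H)‖ 0 with h | h
  · rw [h]; positivity
  have key : ‖(u : H)‖ ^ 2 ≤ ‖resOp Λ ε u‖ * ‖(u : H)‖ := by
    have h1 : ‖(u : H)‖ ^ 2 = (⟪(u : H), (u : H)⟫_ℂ).re := by
      have := inner_self_eq_norm_sq (𝕜 := ℂ) (u : H)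
      simpa using this.symm
    have h2 : (⟪resOp Λ ε u, (u : H)⟫_ℂ).re
        = (⟪(u : H), (u : H)⟫_ℂ).re + ε * (⟪Λ u, (u : H)⟫_ℂ).re := by
      rw [resOp_apply, inner_add_left, inner_smul_left]
      simp [Complex.add_re, Complex.mul_re]
    have h3 : (⟪resOp Λ ε u, (u : H)⟫_ℂ).re ≤ ‖resOp Λ ε u‖ * ‖(u : H)‖ := by
      have := re_inner_le_norm (𝕜 := ℂ) (resOp Λ ε u) (u : H)
      simpa using this
    nlinarith [hpos u, mul_nonneg hε.le (hpos u)]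
  have hu : 0 < ‖(u : H)‖ := lt_of_le_of_ne (norm_nonneg _) (Ne.symm h)
  calc ‖(u : H)‖ = ‖(u : H)‖ ^ 2 / ‖(u : H)‖ := by field_simp [pow_two]
    _ ≤ ‖resOp Λ ε u‖ * ‖(u : H)‖ / ‖(u : H)‖ := by gcongr
    _ = ‖resOp Λ ε u‖ := by field_simp

lemma resOp_surj (hsa : Λ† = Λ) (hpos : ∀ u : Λ.domain, 0 ≤ (⟪Λ u, (u : H)⟫_ℂ).re)
    {ε : ℝ} (hε : 0 < ε) (v : H) : ∃ u : Λ.domain, resOp Λ ε u = v := by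
  set M : Submodule ℂ H := LinearMap.range (resOp Λ ε) with hM
  -- M is sequentially closed, hence closed
  have hclosed : IsClosed (M : Set H) := by
    apply IsSeqClosed.isClosed
    intro w p hw hp
    -- each w n = resOp Λ ε (u n)
    choose u hu using hw
    -- u is Cauchy
    have hcau : CauchySeq (fun n => (u n : H)) := by
      rw [Metric.cauchySeq_iff]
      intro δ hδ
      have hp' : CauchySeq w := hp.cauchySeq
      rw [Metric.cauchySeq_iff] at hp'
      obtain ⟨N, hN⟩ := hp' δ hδ
      refine ⟨N, fun m hm n hn => ?_⟩
      have := resOp_lower hpos hε (u m - u n)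
      rw [_root_.map_sub (resOp Λ ε)] at this
      have h2 : dist (u m : H) (u n : H) ≤ dist (w m) (w n) := by
        rw [dist_eq_norm, dist_eq_norm, ← hu m, ← hu n]
        simpa using this
      exact lt_of_le_of_lt h2 (hN m hm n hn)
    obtain ⟨y, hy⟩ := cauchySeq_tendsto_of_complete hcau
    -- Λ (u n) converges to (p - y)/ε
    have hεne : (ε : ℂ) ≠ 0 := by exact_mod_cast ne_of_gt hε
    have hΛu : ∀ n, Λ (u n) = (ε : ℂ)⁻¹ • (w n - (u n : H)) := by
      intro n
      have hsm : (ε : ℂ) • Λ (u n) = w n - (u n : H) := by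
        rw [← hu n, resOp_apply]; abel
      rw [← hsm, smul_smul, inv_mul_cancel₀ hεne, one_smul]
    have hΛconv : Filter.Tendsto (fun n => Λ (u n)) Filter.atTop (nhds ((ε : ℂ)⁻¹ • (p - y))) := by
      simp only [hΛu]
      exact (hp.sub hy).const_smul _
    obtain ⟨hmem, hval⟩ := lam_closed hsa hy hΛconv
    refine ⟨⟨y, hmem⟩, ?_⟩
    rw [resOp_apply]
    show y + (ε : ℂ) • Λ ⟨y, hmem⟩ = p
    rw [hval, smul_smul, mul_inv_cancel₀ hεne, one_smul]
    abel
  -- M is dense: its orthogonal complement is trivial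
  have horth : Mᗮ = ⊥ := by
    rw [Submodule.eq_bot_iff]
    intro v hv
    have hv' : ∀ u : Λ.domain, ⟪((-ε⁻¹ : ℝ) : ℂ) • v, (u : H)⟫_ℂ = ⟪v, Λ u⟫_ℂ := by
      intro u
      have h0 : ⟪resOp Λ ε u, v⟫_ℂ = 0 := hv _ ⟨u, rfl⟩
      have h0' : ⟪v, resOp Λ ε u⟫_ℂ = 0 := by
        rw [← inner_conj_symm, h0, _root_.map_zero]
      rw [resOp_apply, inner_add_right, inner_smul_right] at h0'
      have hεne : (ε : ℂ) ≠ 0 := by exact_mod_cast ne_of_gt hε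
      have : ⟪v, Λ u⟫_ℂ = -(ε : ℂ)⁻¹ * ⟪v, (u : H)⟫_ℂ := by
        have h2 : (ε : ℂ) * ⟪v, Λ u⟫_ℂ = -⟪v, (u : H)⟫_ℂ := by linear_combination h0'
        field_simp
        linear_combination h2
      rw [inner_smul_left, this, Complex.conj_ofReal]
      push_cast
      ring
    obtain ⟨hmem, hval⟩ := lam_key hsa hv'
    have h0 : 0 ≤ (⟪Λ ⟨v, hmem⟩, v⟫_ℂ).re := hpos ⟨v, hmem⟩
    rw [hval, inner_smul_left] at h0
    simp only [Complex.conj_ofReal] at h0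
    have : (⟪v, v⟫_ℂ).re = ‖v‖ ^ 2 := by
      have := inner_self_eq_norm_sq (𝕜 := ℂ) v
      simpa using this
    rw [Complex.mul_re] at h0
    have him : (⟪v, v⟫_ℂ).im = 0 := by
      have := inner_self_im (𝕜 := ℂ) v
      rw [show RCLike.im ⟪v, v⟫_ℂ = (⟪v, v⟫_ℂ).im from rfl] at this
      exact this
    rw [him] at h0
    simp only [Complex.ofReal_re, Complex.ofReal_im, mul_zero, sub_zero] at h0
    rw [this] at h0
    have hv0 : ‖v‖ ^ 2 ≤ 0 := by
      by_contra hcon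
      push_neg at hcon
      nlinarith [inv_pos.mpr hε]
    have : ‖v‖ = 0 := by nlinarith [sq_nonneg ‖v‖, norm_nonneg v]
    exact norm_eq_zero.mp this
  have : M = ⊤ := by
    haveI : CompleteSpace M := hclosed.completeSpace_coe
    exact Submodule.orthogonal_eq_bot_iff.mp horth
  have hvmem : v ∈ M := this ▸ Submodule.mem_top
  exact hvmem


variable (hsa : Λ† = Λ) (hpos : ∀ u : Λ.domain, 0 ≤ (⟪Λ u, (u : H)⟫_ℂ).re)

/-- The resolvent `(1+εΛ)⁻¹` as a map into the domain of `Λ`. -/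
noncomputable def Res {ε : ℝ} (hε : 0 < ε) (v : H) : Λ.domain :=
  (resOp_surj hsa hpos hε v).choose

lemma Res_spec {ε : ℝ} (hε : 0 < ε) (v : H) :
    (↑(Res hsa hpos hε v) : H) + (ε : ℂ) • Λ (Res hsa hpos hε v) = v :=
  (resOp_surj hsa hpos hε v).choose_spec

lemma Res_unique {ε : ℝ} (hε : 0 < ε) {u : Λ.domain} {v : H}
    (h : (u : H) + (ε : ℂ) • Λ u = v) : Res hsa hpos hε v = u := by
  have hv := Res_spec hsa hpos hε v
  have h1 : resOp Λ ε (Res hsa hpos hε v - u) = 0 := by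
    rw [_root_.map_sub (resOp Λ ε), resOp_apply, resOp_apply, hv, h, sub_self]
  have h2 := resOp_lower hpos hε (Res hsa hpos hε v - u)
  rw [h1, norm_zero] at h2
  have : ((Res hsa hpos hε v - u : Λ.domain) : H) = 0 := norm_le_zero_iff.mp h2
  have : Res hsa hpos hε v - u = 0 := Subtype.ext (by simpa using this)
  exact sub_eq_zero.mp this

lemma Res_norm {ε : ℝ} (hε : 0 < ε) (v : H) : ‖(↑(Res hsa hpos hε v) : H)‖ ≤ ‖v‖ := by
  have := resOp_lower hpos hε (Res hsa hpos hε v)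
  rw [show resOp Λ ε (Res hsa hpos hε v) = v from (resOp_surj hsa hpos hε v).choose_spec] at this
  exact this

lemma Res_add {ε : ℝ} (hε : 0 < ε) (a b : H) :
    Res hsa hpos hε (a + b) = Res hsa hpos hε a + Res hsa hpos hε b := by
  apply Res_unique
  push_cast
  rw [LinearPMap.map_add, smul_add]
  have ha := Res_spec hsa hpos hε a
  have hb := Res_spec hsa hpos hε b
  calc _ = ((↑(Res hsa hpos hε a) : H) + (ε : ℂ) • Λ (Res hsa hpos hε a))
        + ((↑(Res hsa hpos hε b) : H) + (ε : ℂ) • Λ (Res hsa hpos hε b)) := by abel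
    _ = a + b := by rw [ha, hb]

lemma Res_smul {ε : ℝ} (hε : 0 < ε) (c : ℂ) (v : H) :
    Res hsa hpos hε (c • v) = c • Res hsa hpos hε v := by
  apply Res_unique
  push_cast
  rw [LinearPMap.map_smul, smul_comm]
  rw [← smul_add, Res_spec]

lemma Res_sub {ε : ℝ} (hε : 0 < ε) (a b : H) :
    Res hsa hpos hε (a - b) = Res hsa hpos hε a - Res hsa hpos hε b := by
  rw [sub_eq_add_neg, Res_add, show -b = (-1 : ℂ) • b by simp, Res_smul]
  simp [sub_eq_add_neg]

lemma Res_lam {ε : ℝ} (hε : 0 < ε) (v : H) :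
    Λ (Res hsa hpos hε v) = (ε : ℂ)⁻¹ • (v - ↑(Res hsa hpos hε v)) := by
  have hεne : (ε : ℂ) ≠ 0 := by exact_mod_cast ne_of_gt hε
  have h2 : (ε : ℂ) • Λ (Res hsa hpos hε v) = v - ↑(Res hsa hpos hε v) :=
    eq_sub_of_add_eq' (Res_spec hsa hpos hε v)
  rw [← h2, smul_smul, inv_mul_cancel₀ hεne, one_smul]

/-- For `v` in the domain, `Res v = v - ε • Res (Λ v)` and `Λ (Res v) = Res (Λ v)`. -/
lemma Res_comm {ε : ℝ} (hε : 0 < ε) (v : Λ.domain) :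
    Res hsa hpos hε (v : H) = v - (ε : ℂ) • Res hsa hpos hε (Λ v) ∧
    Λ (Res hsa hpos hε (v : H)) = ↑(Res hsa hpos hε (Λ v)) := by
  have hεne : (ε : ℂ) ≠ 0 := by exact_mod_cast ne_of_gt hε
  set u : Λ.domain := v - (ε : ℂ) • Res hsa hpos hε (Λ v) with hu
  have hΛu : Λ u = ↑(Res hsa hpos hε (Λ v)) := by
    rw [hu, LinearPMap.map_sub, LinearPMap.map_smul, Res_lam hsa hpos hε (Λ v)]
    rw [smul_smul, mul_inv_cancel₀ hεne, one_smul]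
    abel
  have huniq : Res hsa hpos hε (v : H) = u := by
    apply Res_unique
    rw [hΛu, hu]
    push_cast
    abel
  refine ⟨huniq, ?_⟩
  rw [huniq, hΛu]


/-- `ε` sequence `1/(n+1)`. -/
noncomputable def epsSeq (n : ℕ) : ℝ := ((n : ℝ) + 1)⁻¹

lemma epsSeq_pos (n : ℕ) : 0 < epsSeq n := by
  unfold epsSeq; positivity

lemma epsSeq_tendsto : Filter.Tendsto epsSeq Filter.atTop (nhds 0) := by
  unfold epsSeq
  exact tendsto_one_div_add_atTop_nhds_zero_nat.congr (by intro n; rw [one_div])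

/-- Strong convergence of the resolvents to the identity. -/
lemma Res_tendsto (v : H) :
    Filter.Tendsto (fun n => (↑(Res hsa hpos (epsSeq_pos n) v) : H)) Filter.atTop (nhds v) := by
  have hd : Dense (Λ.domain : Set H) := by
    have : IsSelfAdjoint Λ := hsa
    exact this.dense_domain
  rw [Metric.tendsto_atTop]
  intro δ hδ
  -- pick u in the domain close to v
  obtain ⟨u', hu'mem, hu'⟩ : ∃ u' ∈ (Λ.domain : Set H), dist v u' < δ / 3 := by
    have := Metric.mem_closure_iff.mp (hd.closure_eq ▸ (Set.mem_univ v) : v ∈ closure (Λ.domain : Set H))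
    exact this (δ / 3) (by linarith)
  set u : Λ.domain := ⟨u', hu'mem⟩
  -- choose N with εₙ ‖Λ u‖ < δ/3 for n ≥ N
  obtain ⟨N, hN⟩ : ∃ N : ℕ, ∀ n ≥ N, epsSeq n * ‖Λ u‖ < δ / 3 := by
    have h1 : Filter.Tendsto (fun n => epsSeq n * ‖Λ u‖) Filter.atTop (nhds 0) := by
      simpa using epsSeq_tendsto.mul_const ‖Λ u‖
    have := (h1.eventually (eventually_lt_nhds (show (0:ℝ) < δ/3 by linarith))).exists_forall_of_atTop
    simpa using this
  refine ⟨N, fun n hn => ?_⟩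
  have hres := Res_comm hsa hpos (epsSeq_pos n) u
  have t1 : ‖(↑(Res hsa hpos (epsSeq_pos n) v) : H) - ↑(Res hsa hpos (epsSeq_pos n) (u : H))‖
      ≤ ‖v - (u : H)‖ := by
    rw [show (↑(Res hsa hpos (epsSeq_pos n) v) : H) - ↑(Res hsa hpos (epsSeq_pos n) (u : H))
        = ↑(Res hsa hpos (epsSeq_pos n) (v - (u : H))) by rw [Res_sub]; push_cast; ring_nf]
    exact Res_norm hsa hpos _ _
  have t2 : ‖(↑(Res hsa hpos (epsSeq_pos n) (u : H)) : H) - (u : H)‖ ≤ epsSeq n * ‖Λ u‖ := by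
    rw [hres.1]
    push_cast
    rw [show (u : H) - (epsSeq n : ℂ) • ↑(Res hsa hpos (epsSeq_pos n) (Λ u)) - (u : H)
        = -((epsSeq n : ℂ) • ↑(Res hsa hpos (epsSeq_pos n) (Λ u))) by abel]
    rw [norm_neg, norm_smul]
    simp only [Complex.norm_real, Real.norm_eq_abs, abs_of_pos (epsSeq_pos n)]
    exact mul_le_mul_of_nonneg_left (Res_norm hsa hpos _ _) (epsSeq_pos n).le
  have : dist (↑(Res hsa hpos (epsSeq_pos n) v) : H) v
      ≤ ‖v - (u:H)‖ + (epsSeq n * ‖Λ u‖) + dist v u' := by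
    rw [dist_eq_norm]
    calc ‖(↑(Res hsa hpos (epsSeq_pos n) v) : H) - v‖
        ≤ ‖(↑(Res hsa hpos (epsSeq_pos n) v) : H) - ↑(Res hsa hpos (epsSeq_pos n) (u : H))‖
          + ‖(↑(Res hsa hpos (epsSeq_pos n) (u : H)) : H) - (u : H)‖ + ‖(u : H) - v‖ := by
          have := norm_sub_le_norm_sub_add_norm_sub (↑(Res hsa hpos (epsSeq_pos n) v) : H)
            (↑(Res hsa hpos (epsSeq_pos n) (u : H)) : H) v
          have h2 := norm_sub_le_norm_sub_add_norm_sub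
            (↑(Res hsa hpos (epsSeq_pos n) (u : H)) : H) (u : H) v
          linarith
      _ ≤ ‖v - (u:H)‖ + (epsSeq n * ‖Λ u‖) + dist v u' := by
          rw [show ‖(u:H) - v‖ = dist v u' from by rw [dist_comm, dist_eq_norm]]
          linarith [t1, t2]
  have hvu : ‖v - (u:H)‖ < δ / 3 := by rw [← dist_eq_norm]; exact hu'
  calc dist (↑(Res hsa hpos (epsSeq_pos n) v) : H) v
      ≤ ‖v - (u:H)‖ + (epsSeq n * ‖Λ u‖) + dist v u' := this
    _ < δ/3 + δ/3 + δ/3 := by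
        have := hN n hn
        gcongr <;> linarith
    _ = δ := by ring


lemma res_step {ε : ℝ} (hε : 0 < ε)
    (T f1 : H →L[ℂ] H)
    (hTmem : ∀ x, x ∈ Λ.domain → T x ∈ Λ.domain)
    (hTcomm : ∀ (x) (hx : x ∈ Λ.domain), Λ ⟨T x, hTmem x hx⟩ = T (Λ ⟨x, hx⟩) + f1 x)
    (v : H) :
    (↑(Res hsa hpos hε (T v + (ε : ℂ) • f1 ↑(Res hsa hpos hε v))) : H)
      = T ↑(Res hsa hpos hε v) := by
  set R := Res hsa hpos hε v with hR
  have hmem : T ↑R ∈ Λ.domain := hTmem _ R.2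
  have hkey : ((⟨T ↑R, hmem⟩ : Λ.domain) : H) + (ε : ℂ) • Λ (⟨T ↑R, hmem⟩ : Λ.domain)
      = T v + (ε : ℂ) • f1 ↑R := by
    have hc : Λ (⟨T ↑R, hmem⟩ : Λ.domain) = T (Λ R) + f1 ↑R := hTcomm ↑R R.2
    rw [hc]
    have hspec : (↑R : H) + (ε : ℂ) • Λ R = v := Res_spec hsa hpos hε v
    calc (T ↑R : H) + (ε : ℂ) • (T (Λ R) + f1 ↑R)
        = T ((↑R : H) + (ε : ℂ) • Λ R) + (ε : ℂ) • f1 ↑R := by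
          rw [_root_.map_add, T.map_smul, smul_add]; abel
      _ = T v + (ε : ℂ) • f1 ↑R := by rw [hspec]
  rw [Res_unique hsa hpos hε hkey]

include hsa hpos in
/-- The key analytic fact: the inverse of an operator preserving the domain with bounded
commutator also preserves the domain, with the expected commutator formula. -/
lemma inverse_preserves
    (T S f1 : H →L[ℂ] H) (hTS : T ∘L S = 1) (hST : S ∘L T = 1)
    (hTmem : ∀ x, x ∈ Λ.domain → T x ∈ Λ.domain)
    (hTcomm : ∀ (x) (hx : x ∈ Λ.domain), Λ ⟨T x, hTmem x hx⟩ = T (Λ ⟨x, hx⟩) + f1 x)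
    (x : H) (hx : x ∈ Λ.domain) :
    ∃ h : S x ∈ Λ.domain, Λ ⟨S x, h⟩ = S (Λ ⟨x, hx⟩) - S (f1 (S x)) := by
  have hTSapp : ∀ z, T (S z) = z := fun z => by
    have := congrArg (fun (A : H →L[ℂ] H) => A z) hTS; simpa using this
  have hSTapp : ∀ z, S (T z) = z := fun z => by
    have := congrArg (fun (A : H →L[ℂ] H) => A z) hST; simpa using this
  set a : ℕ → Λ.domain := fun n => Res hsa hpos (epsSeq_pos n) (S x) with ha
  -- the basic identity for each n
  have haN : ∀ n, (↑(a n) : H)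
      = S ↑(Res hsa hpos (epsSeq_pos n) x)
        + (epsSeq n : ℂ) • S ↑(Res hsa hpos (epsSeq_pos n) (f1 ↑(a n))) := by
    intro n
    have hstep := res_step hsa hpos (epsSeq_pos n) T f1 hTmem hTcomm (S x)
    rw [hTSapp x] at hstep
    have : (↑(a n) : H) = S ↑(Res hsa hpos (epsSeq_pos n)
        (x + (epsSeq n : ℂ) • f1 ↑(a n))) := by
      rw [hstep, hSTapp]
    conv_lhs => rw [this]
    rw [Res_add, Res_smul]
    push_cast
    rw [_root_.map_add, S.map_smul]
  -- the commutator identity for each n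
  have hLan : ∀ n, Λ (a n)
      = S ↑(Res hsa hpos (epsSeq_pos n) (Λ ⟨x, hx⟩))
        - S ↑(Res hsa hpos (epsSeq_pos n) (f1 ↑(a n))) := by
    intro n
    have hεne : ((epsSeq n : ℝ) : ℂ) ≠ 0 := by
      exact_mod_cast ne_of_gt (epsSeq_pos n)
    have hlam : Λ (a n) = ((epsSeq n : ℝ) : ℂ)⁻¹ • (S x - ↑(a n)) :=
      Res_lam hsa hpos (epsSeq_pos n) (S x)
    have hcomm := (Res_comm hsa hpos (epsSeq_pos n) ⟨x, hx⟩).1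
    have hdiff : S x - (↑(a n) : H)
        = (epsSeq n : ℂ) • (S ↑(Res hsa hpos (epsSeq_pos n) (Λ ⟨x, hx⟩))
            - S ↑(Res hsa hpos (epsSeq_pos n) (f1 ↑(a n)))) := by
      conv_lhs => rw [haN n]
      have hx' : S x - S ↑(Res hsa hpos (epsSeq_pos n) (x : H))
          = (epsSeq n : ℂ) • S ↑(Res hsa hpos (epsSeq_pos n) (Λ ⟨x, hx⟩)) := by
        have : ((Res hsa hpos (epsSeq_pos n) ((⟨x, hx⟩ : Λ.domain) : H)) : H)
            = x - (epsSeq n : ℂ) • ↑(Res hsa hpos (epsSeq_pos n) (Λ ⟨x, hx⟩)) := by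
          rw [hcomm]; push_cast; ring_nf
        rw [show (x : H) = ((⟨x, hx⟩ : Λ.domain) : H) from rfl] at *
        rw [this, _root_.map_sub, S.map_smul]
        abel
      rw [smul_sub, ← hx']
      abel
    rw [hlam, hdiff, smul_smul, inv_mul_cancel₀ hεne, one_smul]
  -- limits
  have h1 : Filter.Tendsto (fun n => (↑(a n) : H)) Filter.atTop (nhds (S x)) :=
    Res_tendsto hsa hpos (S x)
  have limA : Filter.Tendsto (fun n => S ↑(Res hsa hpos (epsSeq_pos n) (Λ ⟨x, hx⟩)))
      Filter.atTop (nhds (S (Λ ⟨x, hx⟩))) :=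
    (S.continuous.tendsto _).comp (Res_tendsto hsa hpos (Λ ⟨x, hx⟩))
  have limb : Filter.Tendsto (fun n => f1 (↑(a n) : H)) Filter.atTop (nhds (f1 (S x))) :=
    (f1.continuous.tendsto _).comp h1
  have limc : Filter.Tendsto (fun n => (↑(Res hsa hpos (epsSeq_pos n) (f1 ↑(a n))) : H))
      Filter.atTop (nhds (f1 (S x))) := by
    rw [tendsto_iff_norm_sub_tendsto_zero]
    have hb : Filter.Tendsto
        (fun n => ‖f1 (↑(a n) : H) - f1 (S x)‖
          + ‖(↑(Res hsa hpos (epsSeq_pos n) (f1 (S x))) : H) - f1 (S x)‖)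
        Filter.atTop (nhds 0) := by
      have l1 : Filter.Tendsto (fun n => ‖f1 (↑(a n) : H) - f1 (S x)‖)
          Filter.atTop (nhds 0) := by
        rw [← tendsto_iff_norm_sub_tendsto_zero]; exact limb
      have l2 : Filter.Tendsto
          (fun n => ‖(↑(Res hsa hpos (epsSeq_pos n) (f1 (S x))) : H) - f1 (S x)‖)
          Filter.atTop (nhds 0) := by
        rw [← tendsto_iff_norm_sub_tendsto_zero]
        exact Res_tendsto hsa hpos (f1 (S x))
      simpa using l1.add l2
    apply squeeze_zero (fun n => norm_nonneg _) _ hb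
    intro n
    calc ‖(↑(Res hsa hpos (epsSeq_pos n) (f1 ↑(a n))) : H) - f1 (S x)‖
        ≤ ‖(↑(Res hsa hpos (epsSeq_pos n) (f1 ↑(a n))) : H)
            - ↑(Res hsa hpos (epsSeq_pos n) (f1 (S x)))‖
          + ‖(↑(Res hsa hpos (epsSeq_pos n) (f1 (S x))) : H) - f1 (S x)‖ :=
          norm_sub_le_norm_sub_add_norm_sub _ _ _
      _ ≤ ‖f1 (↑(a n) : H) - f1 (S x)‖
          + ‖(↑(Res hsa hpos (epsSeq_pos n) (f1 (S x))) : H) - f1 (S x)‖ := by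
          gcongr
          rw [show (↑(Res hsa hpos (epsSeq_pos n) (f1 ↑(a n))) : H)
              - ↑(Res hsa hpos (epsSeq_pos n) (f1 (S x)))
              = ↑(Res hsa hpos (epsSeq_pos n) (f1 ↑(a n) - f1 (S x))) by
            rw [Res_sub]; push_cast; ring_nf]
          exact Res_norm hsa hpos _ _
  have limB : Filter.Tendsto (fun n => S ↑(Res hsa hpos (epsSeq_pos n) (f1 ↑(a n))))
      Filter.atTop (nhds (S (f1 (S x)))) :=
    (S.continuous.tendsto _).comp limc
  have h2 : Filter.Tendsto (fun n => Λ (a n)) Filter.atTop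
      (nhds (S (Λ ⟨x, hx⟩) - S (f1 (S x)))) := by
    have := limA.sub limB
    refine this.congr fun n => (hLan n).symm
  exact lam_closed hsa h1 h2


/-- Words `S f_{n₁} S f_{n₂} ⋯ f_{n_r} S` in the inverse `S` and the iterated
commutators `f n` of `T`. -/
noncomputable def word (S : H →L[ℂ] H) (f : ℕ → H →L[ℂ] H) : List ℕ → (H →L[ℂ] H)
  | [] => S
  | n :: l => S ∘L ((f n) ∘L word S f l)

lemma comp_mem_wordClosure (S : H →L[ℂ] H) (f : ℕ → H →L[ℂ] H) (n : ℕ) :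
    ∀ C ∈ AddSubgroup.closure (Set.range (word S f)),
      S ∘L ((f n) ∘L C) ∈ AddSubgroup.closure (Set.range (word S f)) := by
  intro C hC
  induction hC using AddSubgroup.closure_induction with
  | mem B hB =>
    obtain ⟨l, rfl⟩ := hB
    exact AddSubgroup.subset_closure ⟨n :: l, rfl⟩
  | zero => simpa using AddSubgroup.zero_mem _
  | add B₁ B₂ h₁ h₂ ih₁ ih₂ =>
    rw [ContinuousLinearMap.comp_add, ContinuousLinearMap.comp_add]
    exact AddSubgroup.add_mem _ ih₁ ih₂
  | neg B hB ih =>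
    rw [ContinuousLinearMap.comp_neg, ContinuousLinearMap.comp_neg]
    exact AddSubgroup.neg_mem _ ih

include hsa hpos in
lemma word_good (S : H →L[ℂ] H) (f : ℕ → H →L[ℂ] H)
    (hTS : f 0 ∘L S = 1) (hST : S ∘L f 0 = 1)
    (hfmem : ∀ (n : ℕ) (x : H), x ∈ Λ.domain → f n x ∈ Λ.domain)
    (hfrec : ∀ (n : ℕ) (x : H) (hx : x ∈ Λ.domain),
      f (n + 1) x = Λ ⟨f n x, hfmem n x hx⟩ - f n (Λ ⟨x, hx⟩)) :
    ∀ B ∈ AddSubgroup.closure (Set.range (word S f)),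
      (∀ x, x ∈ Λ.domain → B x ∈ Λ.domain) ∧
      ∃ C ∈ AddSubgroup.closure (Set.range (word S f)),
        ∀ (x : H) (hx : x ∈ Λ.domain) (hBx : B x ∈ Λ.domain),
          C x = Λ ⟨B x, hBx⟩ - B (Λ ⟨x, hx⟩) := by
  -- the commutator identity for `T = f 0`
  have hTcomm : ∀ (x) (hx : x ∈ Λ.domain),
      Λ ⟨f 0 x, hfmem 0 x hx⟩ = f 0 (Λ ⟨x, hx⟩) + f 1 x := by
    intro x hx
    have h := (hfrec 0 x hx).symm
    rw [sub_eq_iff_eq_add] at h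
    rw [h]; abel
  -- the key analytic fact for S
  have hS : ∀ (z : H) (hz : z ∈ Λ.domain),
      ∃ h : S z ∈ Λ.domain, Λ ⟨S z, h⟩ = S (Λ ⟨z, hz⟩) - S (f 1 (S z)) :=
    inverse_preserves hsa hpos (f 0) S (f 1) hTS hST (hfmem 0) hTcomm
  have hSmem : ∀ z, z ∈ Λ.domain → S z ∈ Λ.domain := fun z hz => (hS z hz).choose
  have hScomm : ∀ (z : H) (hz : z ∈ Λ.domain) (h : S z ∈ Λ.domain),
      Λ ⟨S z, h⟩ = S (Λ ⟨z, hz⟩) - S (f 1 (S z)) := fun z hz h => (hS z hz).choose_spec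
  intro B hB
  induction hB using AddSubgroup.closure_induction with
  | mem B hB =>
    obtain ⟨l, rfl⟩ := hB
    induction l with
    | nil =>
      refine ⟨fun x hx => hSmem x hx, -(word S f [1]), ?_, ?_⟩
      · exact AddSubgroup.neg_mem _ (AddSubgroup.subset_closure ⟨[1], rfl⟩)
      · intro x hx hBx
        have h1 : Λ (⟨word S f [] x, hBx⟩ : Λ.domain) = S (Λ ⟨x, hx⟩) - S (f 1 (S x)) :=
          hScomm x hx hBx
        rw [ContinuousLinearMap.neg_apply]
        rw [h1]
        show -(S (f 1 (S x))) = S (Λ ⟨x, hx⟩) - S (f 1 (S x)) - S (Λ ⟨x, hx⟩)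
        abel
    | cons n l' ih =>
      obtain ⟨ihpres, C', hC'G, hC'⟩ := ih
      have hypres : ∀ x, x ∈ Λ.domain → word S f (n :: l') x ∈ Λ.domain := by
        intro x hx
        exact hSmem _ (hfmem n _ (ihpres x hx))
      refine ⟨hypres,
        word S f ((n+1) :: l') + S ∘L ((f n) ∘L C') - word S f (1 :: n :: l'), ?_, ?_⟩
      · apply AddSubgroup.sub_mem
        · apply AddSubgroup.add_mem
          · exact AddSubgroup.subset_closure ⟨(n+1) :: l', rfl⟩
          · exact comp_mem_wordClosure S f n C' hC'G
        · exact AddSubgroup.subset_closure ⟨1 :: n :: l', rfl⟩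
      · intro x hx hBx
        have hymem : word S f l' x ∈ Λ.domain := ihpres x hx
        have hzmem : f n (word S f l' x) ∈ Λ.domain := hfmem n _ hymem
        -- step 1 : commutator of f n
        have step1 : Λ (⟨f n (word S f l' x), hzmem⟩ : Λ.domain)
            = f (n+1) (word S f l' x) + f n (Λ ⟨word S f l' x, hymem⟩) := by
          have h := (hfrec n (word S f l' x) hymem).symm
          rw [sub_eq_iff_eq_add] at h
          exact h
        -- step 2 : induction hypothesis
        have step2 : Λ (⟨word S f l' x, hymem⟩ : Λ.domain)
            = C' x + word S f l' (Λ ⟨x, hx⟩) := by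
          have h := (hC' x hx hymem).symm
          rw [sub_eq_iff_eq_add] at h
          exact h
        -- step 3 : commutator of S
        have step3 : Λ (⟨word S f (n :: l') x, hBx⟩ : Λ.domain)
            = S (Λ ⟨f n (word S f l' x), hzmem⟩) - S (f 1 (S (f n (word S f l' x)))) :=
          hScomm (f n (word S f l' x)) hzmem hBx
        rw [step3, step1, step2]
        simp only [ContinuousLinearMap.sub_apply, ContinuousLinearMap.add_apply,
          ContinuousLinearMap.comp_apply, word, _root_.map_add, _root_.map_sub]
        abel
  | zero =>
    refine ⟨fun x hx => by simpa using Λ.domain.zero_mem, 0, AddSubgroup.zero_mem _, ?_⟩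
    intro x hx hBx
    have h0 : (⟨(0 : H →L[ℂ] H) x, hBx⟩ : Λ.domain) = 0 := Subtype.ext (by simp)
    rw [h0]
    simp
  | add B₁ B₂ h₁ h₂ ih₁ ih₂ =>
    obtain ⟨pres₁, C₁, hC₁G, hC₁⟩ := ih₁
    obtain ⟨pres₂, C₂, hC₂G, hC₂⟩ := ih₂
    refine ⟨fun x hx => Λ.domain.add_mem (pres₁ x hx) (pres₂ x hx),
      C₁ + C₂, AddSubgroup.add_mem _ hC₁G hC₂G, ?_⟩
    intro x hx hBx
    have hsplit : (⟨(B₁ + B₂) x, hBx⟩ : Λ.domain)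
        = ⟨B₁ x, pres₁ x hx⟩ + ⟨B₂ x, pres₂ x hx⟩ := Subtype.ext (by simp)
    rw [ContinuousLinearMap.add_apply, hsplit, LinearPMap.map_add,
      hC₁ x hx (pres₁ x hx), hC₂ x hx (pres₂ x hx)]
    simp only [ContinuousLinearMap.add_apply]
    abel
  | neg B hB ih =>
    obtain ⟨pres, C, hCG, hC⟩ := ih
    refine ⟨fun x hx => by simpa using Λ.domain.neg_mem (pres x hx),
      -C, AddSubgroup.neg_mem _ hCG, ?_⟩
    intro x hx hBx
    have hsplit : (⟨(-B) x, hBx⟩ : Λ.domain) = -⟨B x, pres x hx⟩ := Subtype.ext (by simp)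
    rw [ContinuousLinearMap.neg_apply, hsplit, LinearPMap.map_neg, hC x hx (pres x hx)]
    simp only [ContinuousLinearMap.neg_apply]
    abel


/-- The sequence of iterated commutators of the inverse `S`, produced by choice from
`word_good`. -/
noncomputable def seqOP (S : H →L[ℂ] H) (f : ℕ → H →L[ℂ] H)
    (hTS : f 0 ∘L S = 1) (hST : S ∘L f 0 = 1)
    (hfmem : ∀ (n : ℕ) (x : H), x ∈ Λ.domain → f n x ∈ Λ.domain)
    (hfrec : ∀ (n : ℕ) (x : H) (hx : x ∈ Λ.domain),
      f (n + 1) x = Λ ⟨f n x, hfmem n x hx⟩ - f n (Λ ⟨x, hx⟩)) :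
    ℕ → {B : H →L[ℂ] H // B ∈ AddSubgroup.closure (Set.range (word S f))}
  | 0 => ⟨S, AddSubgroup.subset_closure ⟨[], rfl⟩⟩
  | n + 1 =>
    ⟨((word_good hsa hpos S f hTS hST hfmem hfrec
        (seqOP S f hTS hST hfmem hfrec n).1 (seqOP S f hTS hST hfmem hfrec n).2).2).choose,
      ((word_good hsa hpos S f hTS hST hfmem hfrec
        (seqOP S f hTS hST hfmem hfrec n).1 (seqOP S f hTS hST hfmem hfrec n).2).2).choose_spec.1⟩

end Aux

/-- Let `D` be self-adjoint and `Λ = (1+D²)^{1/2}` (a self-adjoint operator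
with `Λ² = 1 + D²`).  Let `T` be a bounded operator with bounded inverse `S`, preserving
`dom Λ`, with all iterated commutators `δⁿ(T) = [Λ, ·]ⁿ(T)` bounded (i.e. `T ∈ OP⁰(D)`).
Then all `δⁿ(T⁻¹)` are bounded (`T⁻¹ ∈ OP⁰(D)`); explicitly, `δ(T⁻¹) = -T⁻¹ δ(T) T⁻¹`. -/
theorem inverse_in_OP_zero
    {H : Type*} [NormedAddCommGroup H] [InnerProductSpace ℂ H] [CompleteSpace H]
    (D Λ : H →ₗ.[ℂ] H) (hDsa : IsSelfAdjoint D) (hΛsa : IsSelfAdjoint Λ)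
    (hΛpos : ∀ u : Λ.domain, 0 ≤ (⟪Λ u, (u : H)⟫_ℂ).re)
    -- `Λ² = 1 + D²`:
    (hΛsq : ∀ (x : H) (hx : x ∈ Λ.domain) (hx2 : Λ ⟨x, hx⟩ ∈ Λ.domain)
      (hxD : x ∈ D.domain) (hxD2 : D ⟨x, hxD⟩ ∈ D.domain),
      Λ ⟨Λ ⟨x, hx⟩, hx2⟩ = x + D ⟨D ⟨x, hxD⟩, hxD2⟩)
    (T S : H →L[ℂ] H) (hTS : T ∘L S = 1) (hST : S ∘L T = 1)
    (hT : InOPZero Λ T) :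
    InOPZero Λ S ∧
      ∀ (hmem : ∀ x ∈ Λ.domain, S x ∈ Λ.domain) (x : H) (hx : x ∈ Λ.domain),
        Λ ⟨S x, hmem x hx⟩ - S (Λ ⟨x, hx⟩)
          = -(S (Λ ⟨x, hx⟩ - T (Λ ⟨S x, hmem x hx⟩))) := by
  have hsa' : Λ† = Λ := hΛsa
  obtain ⟨f, hfmem, hf0, hfrec⟩ := hT
  subst hf0
  constructor
  · -- `S ∈ OP⁰`
    have hgood := word_good hsa' hΛpos S f hTS hST hfmem hfrec
    have hSG : S ∈ AddSubgroup.closure (Set.range (word S f)) :=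
      AddSubgroup.subset_closure ⟨[], rfl⟩
    refine ⟨fun n => (seqOP hsa' hΛpos S f hTS hST hfmem hfrec n).1,
      fun n x hx => (hgood _ (seqOP hsa' hΛpos S f hTS hST hfmem hfrec n).2).1 x hx, rfl, ?_⟩
    intro n x hx
    exact ((hgood _ (seqOP hsa' hΛpos S f hTS hST hfmem hfrec n).2).2).choose_spec.2 x hx _
  · -- the explicit commutator formula
    intro hmem x hx
    have hSTapp : ∀ z, S (f 0 z) = z := fun z => by
      have := congrArg (fun A : H →L[ℂ] H => A z) hST
      simpa using this
    rw [_root_.map_sub, hSTapp]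
    abel
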